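/- (Domination of the trace mgf: without replacement versus with replacement) Let d ≥ 1 and N ≥ 1 be integers, let A_1, …, A_N be real symmetric d×d matrices, let n ∈ {1,…,N}, and let θ ∈ ℝ. Then (1/C(N,n))·Σ_{S⊆[N], |S|=n} tr( exp( θ·Σ_{j∈S} A_j ) ) ≤ (1/N^n)·Σ_{f : [n]→[N]} tr( exp( θ·Σ_{k=1}^n A_{f(k)} ) ), where the right-hand sum runs over all (not necessarily injective) functions f from {1,…,n} to {1,…,N}. That is, the expected trace of the matrix exponential of a sum of n matrices sampled uniformly without replacement from {A_1,…,A_N} is at most that of a sum of n i.i.d. uniform (with replacement) samples. -/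

import Mathlib

open Finset Matrix

variable {d : ℕ}

lemma trace_conj_eq (V M : Matrix (Fin d) (Fin d) ℝ) (hV2 : V * star V = 1) :
    (star V * M * V).trace = M.trace := by
  rw [Matrix.trace_mul_cycle, hV2, Matrix.one_mul]

lemma conj_diag_apply (g : Fin d → ℝ) (W : Matrix (Fin d) (Fin d) ℝ) (i : Fin d) :
    (star W * Matrix.diagonal g * W) i i = ∑ j, g j * (W j i)^2 := by
  simp only [Matrix.mul_apply, Matrix.star_apply, star_trivial, Matrix.diagonal_apply,
    mul_ite, mul_zero, Finset.sum_ite_eq, Finset.sum_ite_eq', Finset.mem_univ, if_true]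
  exact Finset.sum_congr rfl fun k _ => by ring

lemma col_sq_sum (W : Matrix (Fin d) (Fin d) ℝ) (hW : star W * W = 1) (i : Fin d) :
    ∑ j, (W j i)^2 = 1 := by
  have := congrFun (congrFun hW i) i
  simpa [Matrix.mul_apply, Matrix.star_apply, sq, Matrix.one_apply] using this

lemma row_sq_sum (W : Matrix (Fin d) (Fin d) ℝ) (hW : W * star W = 1) (j : Fin d) :
    ∑ i, (W j i)^2 = 1 := by
  have := congrFun (congrFun hW j) j
  simpa [Matrix.mul_apply, Matrix.star_apply, sq, Matrix.one_apply] using this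

lemma trace_exp_eq_sum {A : Matrix (Fin d) (Fin d) ℝ} (hA : A.IsHermitian) :
    (NormedSpace.exp A).trace = ∑ i, Real.exp (hA.eigenvalues i) := by
  classical
  set U : Matrix (Fin d) (Fin d) ℝ := (Matrix.IsHermitian.eigenvectorUnitary hA : Matrix (Fin d) (Fin d) ℝ) with hUdef
  have hU1 : star U * U = 1 := (Unitary.mem_iff.mp (Matrix.IsHermitian.eigenvectorUnitary hA).2).1
  have hU2 : U * star U = 1 := (Unitary.mem_iff.mp (Matrix.IsHermitian.eigenvectorUnitary hA).2).2
  have hinv : U⁻¹ = star U := Matrix.inv_eq_right_inv hU2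
  have hspec : A = U * Matrix.diagonal hA.eigenvalues * U⁻¹ := by
    rw [hinv]
    have := hA.spectral_theorem
    simpa [RCLike.ofReal_real_eq_id] using this
  have hexp : NormedSpace.exp A = U * NormedSpace.exp (Matrix.diagonal hA.eigenvalues) * U⁻¹ := by
    conv_lhs => rw [hspec]
    exact Matrix.exp_conj U _ ⟨⟨U, star U, hU2, hU1⟩, rfl⟩
  rw [hexp, hinv, Matrix.trace_mul_cycle, hU1, Matrix.one_mul,
    Matrix.exp_diagonal, Matrix.trace_diagonal]
  simp [Real.exp_eq_exp_ℝ]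

lemma peierls {A : Matrix (Fin d) (Fin d) ℝ} (hA : A.IsHermitian)
    (V : Matrix (Fin d) (Fin d) ℝ) (hV1 : star V * V = 1) (hV2 : V * star V = 1) :
    ∑ i, Real.exp ((star V * A * V) i i) ≤ (NormedSpace.exp A).trace := by
  classical
  set U : Matrix (Fin d) (Fin d) ℝ := (Matrix.IsHermitian.eigenvectorUnitary hA : Matrix (Fin d) (Fin d) ℝ) with hUdef
  have hU1 : star U * U = 1 := (Unitary.mem_iff.mp (Matrix.IsHermitian.eigenvectorUnitary hA).2).1
  have hU2 : U * star U = 1 := (Unitary.mem_iff.mp (Matrix.IsHermitian.eigenvectorUnitary hA).2).2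
  set W : Matrix (Fin d) (Fin d) ℝ := star U * V with hWdef
  have hW1 : star W * W = 1 := by
    rw [hWdef, StarMul.star_mul, star_star, Matrix.mul_assoc, ← Matrix.mul_assoc U, hU2,
      Matrix.one_mul, hV1]
  have hW2 : W * star W = 1 := by
    rw [hWdef, StarMul.star_mul, star_star, Matrix.mul_assoc, ← Matrix.mul_assoc V, hV2,
      Matrix.one_mul, hU1]
  have hconj : star V * A * V = star W * Matrix.diagonal hA.eigenvalues * W := by
    have hspec : A = U * Matrix.diagonal hA.eigenvalues * star U := by
      have := hA.spectral_theorem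
      simpa [RCLike.ofReal_real_eq_id] using this
    rw [hWdef, StarMul.star_mul, star_star]
    conv_lhs => rw [hspec]
    noncomm_ring
  rw [hconj, trace_exp_eq_sum hA]
  have key : ∀ i, Real.exp ((star W * Matrix.diagonal hA.eigenvalues * W) i i)
      ≤ ∑ j, (W j i)^2 * Real.exp (hA.eigenvalues j) := by
    intro i
    rw [conj_diag_apply]
    have := convexOn_exp.map_sum_le (t := Finset.univ) (w := fun j => (W j i)^2)
      (p := fun j => hA.eigenvalues j) (fun j _ => sq_nonneg _) (col_sq_sum W hW1 i)
      (fun j _ => Set.mem_univ _)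
    simpa [smul_eq_mul, mul_comm] using this
  calc ∑ i, Real.exp ((star W * Matrix.diagonal hA.eigenvalues * W) i i)
      ≤ ∑ i, ∑ j, (W j i)^2 * Real.exp (hA.eigenvalues j) := Finset.sum_le_sum fun i _ => key i
    _ = ∑ j, (∑ i, (W j i)^2) * Real.exp (hA.eigenvalues j) := by
        rw [Finset.sum_comm]; simp [Finset.sum_mul]
    _ = ∑ j, Real.exp (hA.eigenvalues j) := by
        refine Finset.sum_congr rfl fun j _ => by rw [row_sq_sum W hW2 j, one_mul]

lemma Matrix.IsHermitian.real_smul {A : Matrix (Fin d) (Fin d) ℝ} (hA : A.IsHermitian) (a : ℝ) :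
    (a • A).IsHermitian := by
  unfold Matrix.IsHermitian at *
  rw [Matrix.conjTranspose_smul, hA, star_trivial]

lemma trace_exp_two_point {A B : Matrix (Fin d) (Fin d) ℝ} (hA : A.IsHermitian)
    (hB : B.IsHermitian) {a b : ℝ} (ha : 0 ≤ a) (hb : 0 ≤ b) (hab : a + b = 1) :
    (NormedSpace.exp (a • A + b • B)).trace ≤
      a * (NormedSpace.exp A).trace + b * (NormedSpace.exp B).trace := by
  classical
  have hC : (a • A + b • B).IsHermitian := (hA.real_smul a).add (hB.real_smul b)
  set V : Matrix (Fin d) (Fin d) ℝ := (Matrix.IsHermitian.eigenvectorUnitary hC : Matrix (Fin d) (Fin d) ℝ) with hVdef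
  have hV1 : star V * V = 1 := (Unitary.mem_iff.mp (Matrix.IsHermitian.eigenvectorUnitary hC).2).1
  have hV2 : V * star V = 1 := (Unitary.mem_iff.mp (Matrix.IsHermitian.eigenvectorUnitary hC).2).2
  have hdiag : star V * (a • A + b • B) * V = Matrix.diagonal hC.eigenvalues := by
    have := hC.conjStarAlgAut_star_eigenvectorUnitary
    simpa [RCLike.ofReal_real_eq_id] using this
  have heig : ∀ i, hC.eigenvalues i =
      a * (star V * A * V) i i + b * (star V * B * V) i i := by
    intro i
    have h1 : hC.eigenvalues i = (star V * (a • A + b • B) * V) i i := by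
      rw [hdiag, Matrix.diagonal_apply_eq]
    rw [h1]
    have : star V * (a • A + b • B) * V
        = a • (star V * A * V) + b • (star V * B * V) := by
      rw [Matrix.mul_add, Matrix.add_mul]
      congr 1 <;> simp [Matrix.mul_smul, Matrix.smul_mul]
    rw [this]
    simp [Matrix.add_apply, Matrix.smul_apply, smul_eq_mul]
  calc (NormedSpace.exp (a • A + b • B)).trace
      = ∑ i, Real.exp (hC.eigenvalues i) := trace_exp_eq_sum hC
    _ ≤ ∑ i, (a * Real.exp ((star V * A * V) i i) + b * Real.exp ((star V * B * V) i i)) := by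
        refine Finset.sum_le_sum fun i _ => ?_
        rw [heig i]
        simpa [smul_eq_mul] using
          convexOn_exp.2 (Set.mem_univ ((star V * A * V) i i))
            (Set.mem_univ ((star V * B * V) i i)) ha hb hab
    _ = a * ∑ i, Real.exp ((star V * A * V) i i)
        + b * ∑ i, Real.exp ((star V * B * V) i i) := by
        rw [Finset.sum_add_distrib, Finset.mul_sum, Finset.mul_sum]
    _ ≤ a * (NormedSpace.exp A).trace + b * (NormedSpace.exp B).trace :=
        add_le_add (mul_le_mul_of_nonneg_left (peierls hA V hV1 hV2) ha)
          (mul_le_mul_of_nonneg_left (peierls hB V hV1 hV2) hb)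

lemma convexOn_trace_exp :
    ConvexOn ℝ {M : Matrix (Fin d) (Fin d) ℝ | M.IsHermitian}
      (fun M => (NormedSpace.exp M).trace) := by
  refine ⟨fun x hx y hy a b ha hb hab => (hx.real_smul a).add (hy.real_smul b),
    fun x hx y hy a b ha hb hab => ?_⟩
  simpa [smul_eq_mul] using trace_exp_two_point hx hy ha hb hab

lemma exists_perm_mem_iff {α : Type*} [Fintype α] [DecidableEq α] {s t : Finset α}
    (h : s.card = t.card) : ∃ σ : Equiv.Perm α, ∀ x, x ∈ s ↔ σ x ∈ t := by
  have h' : (sᶜ).card = (tᶜ).card := by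
    rw [Finset.card_compl, Finset.card_compl, h]
  let e1 : {x // x ∈ s} ≃ {x // x ∈ t} := Finset.equivOfCardEq h
  let e2 : {x // ¬ x ∈ s} ≃ {x // ¬ x ∈ t} :=
    (Equiv.subtypeEquivRight (fun x => (Finset.mem_compl (s := s)).symm)).trans
      ((Finset.equivOfCardEq h').trans
        (Equiv.subtypeEquivRight (fun x => Finset.mem_compl (s := t))))
  refine ⟨(Equiv.sumCompl (· ∈ s)).symm.trans ((e1.sumCongr e2).trans
    (Equiv.sumCompl (· ∈ t))), fun x => ?_⟩
  by_cases hx : x ∈ s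
  · simp only [Equiv.trans_apply, Equiv.sumCompl_symm_apply_of_pos hx,
      Equiv.sumCongr_apply, Sum.map_inl, Equiv.sumCompl_apply_inl]
    exact ⟨fun _ => (e1 ⟨x, hx⟩).2, fun _ => hx⟩
  · simp only [Equiv.trans_apply, Equiv.sumCompl_symm_apply_of_neg hx,
      Equiv.sumCongr_apply, Sum.map_inr, Equiv.sumCompl_apply_inr]
    exact ⟨fun hc => absurd hc hx, fun hc => absurd hc (e2 ⟨x, hx⟩).2⟩

noncomputable def traceExp {d : ℕ} (M : Matrix (Fin d) (Fin d) ℝ) : ℝ :=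
  (NormedSpace.exp M).trace

lemma isHermitian_sum {d : ℕ} {ι : Type*} (s : Finset ι) (f : ι → Matrix (Fin d) (Fin d) ℝ)
    (h : ∀ i ∈ s, (f i).IsHermitian) : (∑ i ∈ s, f i).IsHermitian := by
  unfold Matrix.IsHermitian at *
  rw [Matrix.conjTranspose_sum]
  exact Finset.sum_congr rfl h

lemma traceExp_avg_le {d : ℕ} {ι : Type*} (s : Finset ι) (hs : s.Nonempty)
    (X : ι → Matrix (Fin d) (Fin d) ℝ) (hX : ∀ i ∈ s, (X i).IsHermitian)
    (M : Matrix (Fin d) (Fin d) ℝ) (hM : ∑ i ∈ s, X i = (s.card : ℝ) • M) :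
    traceExp M ≤ (s.card : ℝ)⁻¹ * ∑ i ∈ s, traceExp (X i) := by
  have hcard : (0:ℝ) < s.card := by exact_mod_cast Finset.card_pos.mpr hs
  have h1 := convexOn_trace_exp.map_sum_le (t := s) (w := fun _ => (s.card:ℝ)⁻¹) (p := X)
    (fun i _ => by positivity) (by rw [Finset.sum_const, nsmul_eq_mul,
      mul_inv_cancel₀ (ne_of_gt hcard)]) hX
  have h2 : ∑ i ∈ s, (s.card:ℝ)⁻¹ • X i = M := by
    rw [← Finset.smul_sum, hM, smul_smul, inv_mul_cancel₀ (ne_of_gt hcard), one_smul]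
  rw [h2] at h1
  simpa [traceExp, Finset.mul_sum] using h1

lemma without_le_perm {d N : ℕ} (B : Fin N → Matrix (Fin d) (Fin d) ℝ)
    (hB : ∀ j, (B j).IsHermitian) (n : ℕ) (hn : 1 ≤ n) (hnN : n ≤ N)
    (c : Fin N → ℕ) (hc : ∑ j, c j = n) :
    (1 / (N.choose n : ℝ)) * ∑ S ∈ Finset.powersetCard n (Finset.univ : Finset (Fin N)),
        traceExp (∑ j ∈ S, B j)
    ≤ (1 / (N.factorial : ℝ)) * ∑ σ : Equiv.Perm (Fin N),
        traceExp (∑ j, (c (σ j) : ℝ) • B j) := by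
  classical
  set P := Finset.powersetCard n (Finset.univ : Finset (Fin N)) with hPdef
  set X : Equiv.Perm (Fin N) → Matrix (Fin d) (Fin d) ℝ :=
    fun σ => ∑ j, (c (σ j) : ℝ) • B j with hXdef
  set T : Finset (Fin N) := Finset.univ.filter (fun j => c j ≠ 0) with hTdef
  set E : Finset (Fin N) → Finset (Equiv.Perm (Fin N)) :=
    fun S => Finset.univ.filter (fun σ => ∀ j, c (σ j) ≠ 0 → j ∈ S) with hEdef
  have hScard : ∀ S ∈ P, S.card = n := fun S hS => (Finset.mem_powersetCard.mp hS).2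
  have hTcard : T.card ≤ n := by
    calc T.card = ∑ j ∈ T, 1 := by simp
      _ ≤ ∑ j ∈ T, c j := Finset.sum_le_sum
          (fun j hj => Nat.one_le_iff_ne_zero.mpr (Finset.mem_filter.mp hj).2)
      _ ≤ ∑ j, c j := Finset.sum_le_sum_of_subset (Finset.subset_univ T)
      _ = n := hc
  have hXherm : ∀ σ, (X σ).IsHermitian :=
    fun σ => isHermitian_sum _ _ (fun j _ => (hB j).real_smul _)
  have hEne : ∀ S ∈ P, (E S).Nonempty := by
    intro S hS
    obtain ⟨S', hS'sub, hS'card⟩ :=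
      Finset.exists_subset_card_eq (s := S) (hTcard.trans (hScard S hS).symm.le)
    obtain ⟨σ, hσ⟩ := exists_perm_mem_iff (s := S') (t := T) hS'card
    refine ⟨σ, Finset.mem_filter.mpr ⟨Finset.mem_univ _, fun j hj => ?_⟩⟩
    have hmem : σ j ∈ T := Finset.mem_filter.mpr ⟨Finset.mem_univ _, hj⟩
    exact hS'sub ((hσ j).mpr hmem)
  have hcount : ∀ S ∈ P, ∀ j, ∑ σ ∈ E S, c (σ j) = if j ∈ S then (E S).card else 0 := by
    intro S hS
    have hrow : ∀ σ ∈ E S, ∑ j ∈ S, c (σ j) = n := by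
      intro σ hσ
      have h0 : ∀ j ∈ Finset.univ, j ∉ S → c (σ j) = 0 := by
        intro j _ hj
        by_contra h
        exact hj ((Finset.mem_filter.mp hσ).2 j h)
      rw [Finset.sum_subset (Finset.subset_univ S) h0, Equiv.sum_comp σ (fun j => c j), hc]
    have hswapS : ∀ {a b : Fin N}, a ∈ S → b ∈ S → ∀ y ∈ S, Equiv.swap a b y ∈ S := by
      intro a b ha hb y hy
      rcases eq_or_ne y a with rfl | hya
      · rw [Equiv.swap_apply_left]; exact hb
      rcases eq_or_ne y b with rfl | hyb
      · rw [Equiv.swap_apply_right]; exact ha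
      · rw [Equiv.swap_apply_of_ne_of_ne hya hyb]; exact hy
    have hmemE : ∀ {a b : Fin N}, a ∈ S → b ∈ S → ∀ σ ∈ E S, σ * Equiv.swap a b ∈ E S := by
      intro a b ha hb σ hσ
      refine Finset.mem_filter.mpr ⟨Finset.mem_univ _, fun j hj => ?_⟩
      have h1 : Equiv.swap a b j ∈ S := (Finset.mem_filter.mp hσ).2 _ hj
      have h2 : Equiv.swap a b (Equiv.swap a b j) ∈ S := hswapS ha hb _ h1
      rwa [Equiv.swap_apply_self] at h2
    have hconst : ∀ a ∈ S, ∀ b ∈ S, ∑ σ ∈ E S, c (σ a) = ∑ σ ∈ E S, c (σ b) := by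
      intro a ha b hb
      refine Finset.sum_bij' (fun σ _ => σ * Equiv.swap a b) (fun σ _ => σ * Equiv.swap a b)
        (fun σ hσ => hmemE ha hb σ hσ) (fun σ hσ => hmemE ha hb σ hσ)
        (fun σ _ => by
          show σ * Equiv.swap a b * Equiv.swap a b = σ
          rw [mul_assoc, Equiv.swap_mul_self, mul_one])
        (fun σ _ => by
          show σ * Equiv.swap a b * Equiv.swap a b = σ
          rw [mul_assoc, Equiv.swap_mul_self, mul_one])
        (fun σ hσ => ?_)
      simp [Equiv.Perm.mul_apply, Equiv.swap_apply_left]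
    intro j
    by_cases hj : j ∈ S
    · have h1 : ∑ b ∈ S, (∑ σ ∈ E S, c (σ b)) = S.card * ∑ σ ∈ E S, c (σ j) := by
        rw [Finset.sum_congr rfl (fun b hb => hconst b hb j hj), Finset.sum_const, smul_eq_mul]
      have h2 : ∑ b ∈ S, (∑ σ ∈ E S, c (σ b)) = (E S).card * n := by
        rw [Finset.sum_comm, Finset.sum_congr rfl hrow, Finset.sum_const, smul_eq_mul]
      rw [if_pos hj]
      have h3 := h1.symm.trans h2
      rw [hScard S hS] at h3
      exact Nat.eq_of_mul_eq_mul_left hn (h3.trans (Nat.mul_comm _ _))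
    · rw [if_neg hj]
      refine Finset.sum_eq_zero fun σ hσ => ?_
      by_contra h
      exact hj ((Finset.mem_filter.mp hσ).2 j h)
  have hEsum : ∀ S ∈ P, ∑ σ ∈ E S, X σ = ((E S).card : ℝ) • ∑ j ∈ S, B j := by
    intro S hS
    have hstep : ∀ j, ∑ σ ∈ E S, (c (σ j) : ℝ) • B j
        = (if j ∈ S then ((E S).card : ℝ) else 0) • B j := by
      intro j
      rw [← Finset.sum_smul]
      congr 1
      rw [← Nat.cast_sum, hcount S hS j]
      split_ifs <;> simp
    calc ∑ σ ∈ E S, X σ = ∑ j, ∑ σ ∈ E S, (c (σ j) : ℝ) • B j := Finset.sum_comm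
      _ = ∑ j, (if j ∈ S then ((E S).card : ℝ) else 0) • B j :=
          Finset.sum_congr rfl fun j _ => hstep j
      _ = ∑ j ∈ S, ((E S).card : ℝ) • B j := by
          simp only [ite_smul, zero_smul]
          rw [Finset.sum_ite_mem, Finset.univ_inter]
      _ = ((E S).card : ℝ) • ∑ j ∈ S, B j := (Finset.smul_sum).symm
  have hK : ∀ S ∈ P, ∀ S' ∈ P, (E S).card = (E S').card := by
    intro S hS S' hS'
    obtain ⟨τ, hτ⟩ := exists_perm_mem_iff (s := S) (t := S')
      ((hScard S hS).trans (hScard S' hS').symm)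
    have hmem1 : ∀ σ ∈ E S, σ * τ.symm ∈ E S' := by
      intro σ hσ
      refine Finset.mem_filter.mpr ⟨Finset.mem_univ _, fun j hj => ?_⟩
      have h1 : τ.symm j ∈ S := (Finset.mem_filter.mp hσ).2 _ hj
      have h2 := (hτ (τ.symm j)).mp h1
      rwa [Equiv.apply_symm_apply] at h2
    have hmem2 : ∀ σ ∈ E S', σ * τ ∈ E S := by
      intro σ hσ
      refine Finset.mem_filter.mpr ⟨Finset.mem_univ _, fun j hj => ?_⟩
      have h1 : τ j ∈ S' := (Finset.mem_filter.mp hσ).2 _ hj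
      exact (hτ j).mpr h1
    refine Finset.card_bij' (fun σ _ => σ * τ.symm) (fun σ _ => σ * τ)
      hmem1 hmem2 ?_ ?_
    · intro σ _
      show σ * τ.symm * τ = σ
      rw [mul_assoc]
      simp
      exact inv_mul_cancel τ
    · intro σ _
      show σ * τ * τ.symm = σ
      rw [mul_assoc]
      simp
      exact mul_inv_cancel τ
  have hL : ∀ σ σ' : Equiv.Perm (Fin N),
      (P.filter (fun S => σ ∈ E S)).card = (P.filter (fun S => σ' ∈ E S)).card := by
    intro σ σ'
    have key : ∀ (ρ ρ' : Equiv.Perm (Fin N)), (∀ j, ρ.symm (ρ' j) = (ρ'.trans ρ.symm) j) →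
        True := fun _ _ _ => trivial
    refine Finset.card_bij' (fun S _ => S.map (σ.trans σ'.symm).toEmbedding)
      (fun S _ => S.map (σ'.trans σ.symm).toEmbedding) ?_ ?_ ?_ ?_
    · intro S hS0
      obtain ⟨hSP, hσS⟩ := Finset.mem_filter.mp hS0
      refine Finset.mem_filter.mpr ⟨?_, ?_⟩
      · refine Finset.mem_powersetCard.mpr ⟨Finset.subset_univ _, ?_⟩
        rw [Finset.card_map]
        exact hScard S hSP
      · refine Finset.mem_filter.mpr ⟨Finset.mem_univ _, fun j hj => ?_⟩
        have hx : σ.symm (σ' j) ∈ S := by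
          apply (Finset.mem_filter.mp hσS).2
          rwa [Equiv.apply_symm_apply]
        rw [Finset.mem_map_equiv]
        simpa using hx
    · intro S hS0
      obtain ⟨hSP, hσS⟩ := Finset.mem_filter.mp hS0
      refine Finset.mem_filter.mpr ⟨?_, ?_⟩
      · refine Finset.mem_powersetCard.mpr ⟨Finset.subset_univ _, ?_⟩
        rw [Finset.card_map]
        exact hScard S hSP
      · refine Finset.mem_filter.mpr ⟨Finset.mem_univ _, fun j hj => ?_⟩
        have hx : σ'.symm (σ j) ∈ S := by
          apply (Finset.mem_filter.mp hσS).2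
          rwa [Equiv.apply_symm_apply]
        rw [Finset.mem_map_equiv]
        simpa using hx
    · intro S _
      ext x
      simp [Finset.mem_map_equiv]
    · intro S _
      ext x
      simp [Finset.mem_map_equiv]
  have hPne : P.Nonempty := by
    rw [← Finset.card_pos, hPdef, Finset.card_powersetCard, Finset.card_univ, Fintype.card_fin]
    exact Nat.choose_pos hnN
  obtain ⟨S₀, hS₀⟩ := hPne
  set K := (E S₀).card with hKdef
  set Lc := (P.filter (fun S => (1 : Equiv.Perm (Fin N)) ∈ E S)).card with hLdef
  have hKpos : 0 < K := Finset.card_pos.mpr (hEne S₀ hS₀)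
  have hPcard : P.card = N.choose n := by
    rw [hPdef, Finset.card_powersetCard, Finset.card_univ, Fintype.card_fin]
  have hdc : N.choose n * K = N.factorial * Lc := by
    have h1 : ∑ S ∈ P, (E S).card = P.card * K := by
      rw [Finset.sum_congr rfl (fun S hS => hK S hS S₀ hS₀), Finset.sum_const, smul_eq_mul]
    have h2 : ∑ S ∈ P, (E S).card
        = ∑ σ : Equiv.Perm (Fin N), (P.filter (fun S => σ ∈ E S)).card := by
      calc ∑ S ∈ P, (E S).card
          = ∑ S ∈ P, ∑ σ : Equiv.Perm (Fin N), if σ ∈ E S then 1 else 0 := by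
            refine Finset.sum_congr rfl fun S _ => ?_
            rw [← Finset.card_filter, Finset.filter_univ_mem]
        _ = ∑ σ : Equiv.Perm (Fin N), ∑ S ∈ P, if σ ∈ E S then 1 else 0 := Finset.sum_comm
        _ = ∑ σ : Equiv.Perm (Fin N), (P.filter (fun S => σ ∈ E S)).card :=
            Finset.sum_congr rfl fun σ _ => (Finset.card_filter _ _).symm
    have h3 : ∑ σ : Equiv.Perm (Fin N), (P.filter (fun S => σ ∈ E S)).card
        = N.factorial * Lc := by
      rw [Finset.sum_congr rfl (fun σ _ => hL σ 1), Finset.sum_const, smul_eq_mul,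
        Finset.card_univ, Fintype.card_perm, Fintype.card_fin]
    rw [← hPcard, ← h1, h2, h3]
  have hLpos : 0 < Lc := by
    rcases Nat.eq_zero_or_pos Lc with h | h
    · exfalso
      rw [h, Nat.mul_zero] at hdc
      have h1 : 0 < N.choose n * K := Nat.mul_pos (Nat.choose_pos hnN) hKpos
      omega
    · exact h
  have hjensen : ∀ S ∈ P, traceExp (∑ j ∈ S, B j)
      ≤ (K : ℝ)⁻¹ * ∑ σ ∈ E S, traceExp (X σ) := by
    intro S hS
    have := traceExp_avg_le (E S) (hEne S hS) X (fun σ _ => hXherm σ)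
      (∑ j ∈ S, B j) (hEsum S hS)
    rwa [hK S hS S₀ hS₀] at this
  have hswap : ∑ S ∈ P, ∑ σ ∈ E S, traceExp (X σ)
      = (Lc : ℝ) * ∑ σ : Equiv.Perm (Fin N), traceExp (X σ) := by
    calc ∑ S ∈ P, ∑ σ ∈ E S, traceExp (X σ)
        = ∑ S ∈ P, ∑ σ : Equiv.Perm (Fin N), if σ ∈ E S then traceExp (X σ) else 0 := by
          refine Finset.sum_congr rfl fun S _ => ?_
          rw [Finset.sum_ite_mem, Finset.univ_inter]
      _ = ∑ σ : Equiv.Perm (Fin N), ∑ S ∈ P, if σ ∈ E S then traceExp (X σ) else 0 :=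
          Finset.sum_comm
      _ = ∑ σ : Equiv.Perm (Fin N), (Lc : ℝ) * traceExp (X σ) := by
          refine Finset.sum_congr rfl fun σ _ => ?_
          rw [← Finset.sum_filter, Finset.sum_const, nsmul_eq_mul, hL σ 1]
      _ = (Lc : ℝ) * ∑ σ : Equiv.Perm (Fin N), traceExp (X σ) := by
          rw [Finset.mul_sum]
  have hchain : ∑ S ∈ P, traceExp (∑ j ∈ S, B j)
      ≤ (K : ℝ)⁻¹ * ((Lc : ℝ) * ∑ σ : Equiv.Perm (Fin N), traceExp (X σ)) := by
    calc ∑ S ∈ P, traceExp (∑ j ∈ S, B j)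
        ≤ ∑ S ∈ P, (K : ℝ)⁻¹ * ∑ σ ∈ E S, traceExp (X σ) :=
          Finset.sum_le_sum hjensen
      _ = (K : ℝ)⁻¹ * ∑ S ∈ P, ∑ σ ∈ E S, traceExp (X σ) := by rw [← Finset.mul_sum]
      _ = (K : ℝ)⁻¹ * ((Lc : ℝ) * ∑ σ : Equiv.Perm (Fin N), traceExp (X σ)) := by rw [hswap]
  have hCpos : (0:ℝ) < N.choose n := by exact_mod_cast Nat.choose_pos hnN
  have hKpos' : (0:ℝ) < K := by exact_mod_cast hKpos
  have hFpos : (0:ℝ) < N.factorial := by exact_mod_cast N.factorial_pos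
  have hcast : (N.choose n : ℝ) * K = (N.factorial : ℝ) * Lc := by exact_mod_cast hdc
  have hfrac : (1 / (N.choose n : ℝ)) * ((K : ℝ)⁻¹ * (Lc : ℝ)) = 1 / (N.factorial : ℝ) := by
    field_simp
    linarith [hcast]
  calc (1 / (N.choose n : ℝ)) * ∑ S ∈ P, traceExp (∑ j ∈ S, B j)
      ≤ (1 / (N.choose n : ℝ)) *
        ((K : ℝ)⁻¹ * ((Lc : ℝ) * ∑ σ : Equiv.Perm (Fin N), traceExp (X σ))) := by
        apply mul_le_mul_of_nonneg_left hchain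
        positivity
    _ = ((1 / (N.choose n : ℝ)) * ((K : ℝ)⁻¹ * (Lc : ℝ))) *
        ∑ σ : Equiv.Perm (Fin N), traceExp (X σ) := by ring
    _ = (1 / (N.factorial : ℝ)) * ∑ σ : Equiv.Perm (Fin N), traceExp (X σ) := by rw [hfrac]

/-- **Domination of the trace mgf: sampling without replacement versus with replacement.**
For symmetric matrices `A_1, …, A_N`, `1 ≤ n ≤ N` and `θ ∈ ℝ`, the average over all
`n`-element subsets `S ⊆ [N]` of `tr(exp(θ·∑_{j∈S} A_j))` is at most the average over all
functions `f : [n] → [N]` of `tr(exp(θ·∑_k A_{f(k)}))`. -/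
theorem trace_mgf_without_le_with_replacement
    {d N : ℕ} (hd : 1 ≤ d) (hN : 1 ≤ N)
    (A : Fin N → Matrix (Fin d) (Fin d) ℝ)
    (hsymm : ∀ j, (A j).IsSymm)
    (n : ℕ) (hn : 1 ≤ n) (hnN : n ≤ N) (θ : ℝ) :
    (1 / (N.choose n : ℝ)) *
        ∑ S ∈ Finset.powersetCard n (Finset.univ : Finset (Fin N)),
          Matrix.trace (NormedSpace.exp (θ • ∑ j ∈ S, A j)) ≤
      (1 / ((N : ℝ) ^ n)) *
        ∑ f : Fin n → Fin N,
          Matrix.trace (NormedSpace.exp (θ • ∑ k, A (f k))) := by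
  classical
  set B : Fin N → Matrix (Fin d) (Fin d) ℝ := fun j => θ • A j with hBdef
  have hB : ∀ j, (B j).IsHermitian := by
    intro j
    have h : (A j).IsHermitian := by
      rw [Matrix.IsHermitian, Matrix.conjTranspose_eq_transpose_of_trivial]
      exact hsymm j
    exact h.real_smul θ
  set cf : (Fin n → Fin N) → Fin N → ℕ :=
    fun f j => (Finset.univ.filter (fun k => f k = j)).card with hcfdef
  have hcf_sum : ∀ f : Fin n → Fin N, ∑ j, cf f j = n := by
    intro f
    have h := Finset.card_eq_sum_card_fiberwise
      (f := f) (s := Finset.univ) (t := Finset.univ) (fun x _ => Finset.mem_univ _)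
    rw [Finset.card_univ, Fintype.card_fin] at h
    exact h.symm
  have hsum_eq : ∀ f : Fin n → Fin N, ∑ k, B (f k) = ∑ j, (cf f j : ℝ) • B j := by
    intro f
    rw [← Finset.sum_fiberwise Finset.univ f (fun k => B (f k))]
    refine Finset.sum_congr rfl fun j _ => ?_
    rw [Finset.sum_congr rfl (fun k hk => by rw [(Finset.mem_filter.mp hk).2]),
      Finset.sum_const]
    exact (Nat.cast_smul_eq_nsmul ℝ _ _).symm
  have key : ∀ f : Fin n → Fin N,
      (1 / (N.choose n : ℝ)) *
        ∑ S ∈ Finset.powersetCard n (Finset.univ : Finset (Fin N)), traceExp (∑ j ∈ S, B j)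
      ≤ (1 / (N.factorial : ℝ)) * ∑ σ : Equiv.Perm (Fin N),
          traceExp (∑ j, (cf f (σ j) : ℝ) • B j) :=
    fun f => without_le_perm B hB n hn hnN (cf f) (hcf_sum f)
  have hcfeq : ∀ (σ : Equiv.Perm (Fin N)) (g : Fin n → Fin N) (j : Fin N),
      cf (fun k => σ (g k)) (σ j) = cf g j := by
    intro σ g j
    show (Finset.univ.filter (fun k => σ (g k) = σ j)).card
      = (Finset.univ.filter (fun k => g k = j)).card
    congr 1
    apply Finset.filter_congr
    intro k _
    simp [σ.injective.eq_iff]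
  have hre : ∀ σ : Equiv.Perm (Fin N),
      ∑ f : Fin n → Fin N, traceExp (∑ j, (cf f j : ℝ) • B j)
      = ∑ f : Fin n → Fin N, traceExp (∑ j, (cf f (σ j) : ℝ) • B j) := by
    intro σ
    refine Fintype.sum_equiv (Equiv.arrowCongr (Equiv.refl (Fin n)) σ)
      (fun g => traceExp (∑ j, (cf g j : ℝ) • B j))
      (fun f => traceExp (∑ j, (cf f (σ j) : ℝ) • B j)) (fun g => ?_)
    have hthis : ∀ j, cf ((Equiv.arrowCongr (Equiv.refl (Fin n)) σ) g) (σ j) = cf g j := by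
      intro j
      have h := hcfeq σ g j
      convert h using 3
      rfl
    show traceExp (∑ j, ((cf g j : ℝ)) • B j)
      = traceExp (∑ j, ((cf ((Equiv.arrowCongr (Equiv.refl (Fin n)) σ) g) (σ j) : ℝ)) • B j)
    refine congrArg _ (Finset.sum_congr rfl fun j _ => ?_)
    rw [hthis j]
  have sumineq := Finset.sum_le_sum (f := fun _ : Fin n → Fin N =>
      (1 / (N.choose n : ℝ)) *
        ∑ S ∈ Finset.powersetCard n (Finset.univ : Finset (Fin N)), traceExp (∑ j ∈ S, B j))
    (g := fun f : Fin n → Fin N => (1 / (N.factorial : ℝ)) * ∑ σ : Equiv.Perm (Fin N),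
          traceExp (∑ j, (cf f (σ j) : ℝ) • B j))
    (s := Finset.univ) (fun f _ => key f)
  have hcardfun : (Finset.univ : Finset (Fin n → Fin N)).card = N ^ n := by
    rw [Finset.card_univ]
    simp [Fintype.card_fun]
  have hFne : (N.factorial : ℝ) ≠ 0 := by
    exact_mod_cast N.factorial_pos.ne'
  have hRHS : ∑ f : Fin n → Fin N, (1 / (N.factorial : ℝ)) * ∑ σ : Equiv.Perm (Fin N),
        traceExp (∑ j, (cf f (σ j) : ℝ) • B j)
      = ∑ f : Fin n → Fin N, traceExp (∑ j, (cf f j : ℝ) • B j) := by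
    rw [← Finset.mul_sum, Finset.sum_comm]
    rw [Finset.sum_congr rfl (fun σ _ => (hre σ).symm)]
    rw [Finset.sum_const, Finset.card_univ, Fintype.card_perm, Fintype.card_fin, nsmul_eq_mul]
    rw [← mul_assoc, one_div, inv_mul_cancel₀ hFne, one_mul]
  rw [hRHS] at sumineq
  rw [Finset.sum_const, hcardfun, nsmul_eq_mul] at sumineq
  -- rewrite goal in terms of traceExp and B
  have hg1 : ∀ S : Finset (Fin N),
      Matrix.trace (NormedSpace.exp (θ • ∑ j ∈ S, A j)) = traceExp (∑ j ∈ S, B j) := by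
    intro S
    unfold traceExp
    rw [Finset.smul_sum]
  have hg2 : ∀ f : Fin n → Fin N,
      Matrix.trace (NormedSpace.exp (θ • ∑ k, A (f k)))
        = traceExp (∑ j, (cf f j : ℝ) • B j) := by
    intro f
    unfold traceExp
    rw [Finset.smul_sum, hsum_eq f]
  rw [Finset.sum_congr rfl (fun S _ => hg1 S), Finset.sum_congr rfl (fun f _ => hg2 f)]
  have hNn : (0:ℝ) < (N:ℝ) ^ n := by positivity
  calc (1 / (N.choose n : ℝ)) *
        ∑ S ∈ Finset.powersetCard n (Finset.univ : Finset (Fin N)), traceExp (∑ j ∈ S, B j)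
      = (1 / ((N:ℝ) ^ n)) * (((N:ℝ) ^ n) * ((1 / (N.choose n : ℝ)) *
          ∑ S ∈ Finset.powersetCard n (Finset.univ : Finset (Fin N)),
            traceExp (∑ j ∈ S, B j))) := by
        field_simp
    _ ≤ (1 / ((N:ℝ) ^ n)) * ∑ f : Fin n → Fin N, traceExp (∑ j, (cf f j : ℝ) • B j) := by
        apply mul_le_mul_of_nonneg_left _ (by positivity)
        exact_mod_cast sumineq
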